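/- Let {a₁,…,a₉} be a maximal partial line spread of type X with common line a₉ and special plane α₉, and let B be a codeword plane for the spread. If B ⊓ a₉ = ⊥, then exactly one of the four holes of the spread lies in B. -/

import Mathlib

open Module

/-- The holes of a partial line spread: the nonzero vectors covered by none of its lines. -/
def holes (a : Fin 9 → Submodule (ZMod 2) (Fin 5 → ZMod 2)) : Set (Fin 5 → ZMod 2) :=
  {v | v ≠ 0 ∧ ∀ i, v ∉ a i}

/-- For a maximal partial line spread {a₁,…,a₉} of type X with common
line a₉ (= `a 8`) and special plane α₉, and a codeword plane B: if B is disjoint from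
the common line a₉, then exactly one of the four holes of the spread lies in B. -/
theorem stmt_2
    (a : Fin 9 → Submodule (ZMod 2) (Fin 5 → ZMod 2))
    (α₉ B : Submodule (ZMod 2) (Fin 5 → ZMod 2))
    (haLines : ∀ i, finrank (ZMod 2) (a i) = 2)
    (hadisj : ∀ i j, i ≠ j → a i ⊓ a j = ⊥)
    (hr1 : finrank (ZMod 2) ↥(a 0 ⊔ a 1 ⊔ a 8) = 4)
    (hr2 : finrank (ZMod 2) ↥(a 2 ⊔ a 3 ⊔ a 8) = 4)
    (hr3 : finrank (ZMod 2) ↥(a 4 ⊔ a 5 ⊔ a 8) = 4)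
    (hr4 : finrank (ZMod 2) ↥(a 6 ⊔ a 7 ⊔ a 8) = 4)
    (hα : finrank (ZMod 2) α₉ = 3)
    (ha8α : a 8 ≤ α₉)
    (hspec : ∀ v : Fin 5 → ZMod 2, v ≠ 0 → (v ∈ α₉ ↔ v ∈ a 8 ∨ v ∈ holes a))
    (hB : finrank (ZMod 2) B = 3)
    (hBcode : ∀ i, finrank (ZMod 2) ↥(B ⊓ a i) ≤ 1)
    (hB9 : B ⊓ a 8 = ⊥) :
    (holes a ∩ ↑B).ncard = 1 := by
  have hV : finrank (ZMod 2) (Fin 5 → ZMod 2) = 5 := by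
    simp [finrank_fintype_fun_eq_card]
  set W := B ⊓ α₉ with hWdef
  have h3 : W ⊓ a 8 = ⊥ := by
    rw [eq_bot_iff, ← hB9]
    exact inf_le_inf_right _ inf_le_left
  have hdim : finrank (ZMod 2) W = 1 := by
    have h1 : finrank (ZMod 2) ↥(B ⊔ α₉) + finrank (ZMod 2) ↥W = 3 + 3 := by
      rw [Submodule.finrank_sup_add_finrank_inf_eq, hB, hα]
    have h2 : finrank (ZMod 2) ↥(B ⊔ α₉) ≤ 5 := by
      have := Submodule.finrank_le (B ⊔ α₉); rwa [hV] at this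
    have h4 : finrank (ZMod 2) ↥(W ⊔ a 8) + finrank (ZMod 2) ↥(W ⊓ a 8)
        = finrank (ZMod 2) W + 2 := by
      rw [Submodule.finrank_sup_add_finrank_inf_eq, haLines]
    have h5 : W ⊔ a 8 ≤ α₉ := sup_le inf_le_right ha8α
    have h6 : finrank (ZMod 2) ↥(W ⊔ a 8) ≤ 3 := by
      have := Submodule.finrank_mono h5; rwa [hα] at this
    rw [h3, finrank_bot] at h4
    omega
  obtain ⟨v, hv0, hvgen⟩ := finrank_eq_one_iff'.mp hdim
  have hvne : (v : Fin 5 → ZMod 2) ≠ 0 := fun h => hv0 (Subtype.ext h)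
  have hvB : (v : Fin 5 → ZMod 2) ∈ B := v.2.1
  have hvα : (v : Fin 5 → ZMod 2) ∈ α₉ := v.2.2
  have hvna8 : (v : Fin 5 → ZMod 2) ∉ a 8 := by
    intro h
    have : (v : Fin 5 → ZMod 2) ∈ B ⊓ a 8 := ⟨hvB, h⟩
    rw [hB9] at this
    exact hvne this
  have hvhole : (v : Fin 5 → ZMod 2) ∈ holes a := by
    rcases (hspec _ hvne).mp hvα with h | h
    · exact absurd h hvna8
    · exact h
  have hset : holes a ∩ ↑B = {(v : Fin 5 → ZMod 2)} := by
    ext w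
    constructor
    · rintro ⟨⟨hwne, hw⟩, hwB⟩
      have hwα : w ∈ α₉ := (hspec w hwne).mpr (Or.inr ⟨hwne, hw⟩)
      have hwW : w ∈ W := ⟨hwB, hwα⟩
      obtain ⟨c, hc⟩ := hvgen ⟨w, hwW⟩
      have hc' : c • (v : Fin 5 → ZMod 2) = w := congrArg Subtype.val hc
      fin_cases c
      · change (0 : ZMod 2) • (v : Fin 5 → ZMod 2) = w at hc'
        simp at hc'; exact absurd hc'.symm hwne
      · change (1 : ZMod 2) • (v : Fin 5 → ZMod 2) = w at hc'
        simpa using hc'.symm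
    · rintro rfl
      exact ⟨hvhole, hvB⟩
  rw [hset, Set.ncard_singleton]
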